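/- Let V be a real inner product space. For a nonzero vector v ∈ V and a scalar c ∈ ℝ, let ρ_{v,c} : V → V denote the affine reflection across the affine hyperplane {x ∈ V : ⟪x, v⟫ = c}, given by ρ_{v,c}(x) = x − (2(⟪x, v⟫ − c)/⟪v, v⟫) • v. If v₁, v₂ ∈ V are nonzero, c₁, c₂ ∈ ℝ, and there is a point μ ∈ V with ρ_{v₁,c₁}(μ) = ρ_{v₂,c₂}(μ) and ρ_{v₁,c₁}(μ) ≠ μ, then ρ_{v₁,c₁} = ρ_{v₂,c₂} as maps V → V. -/

import Mathlib

open scoped RealInnerProductSpace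

/-- The affine reflection across the affine hyperplane `{x : V | ⟪x, v⟫ = c}`. -/
noncomputable def affineReflection {V : Type*} [NormedAddCommGroup V] [InnerProductSpace ℝ V]
    (v : V) (c : ℝ) (x : V) : V :=
  x - ((2 * (⟪x, v⟫ - c)) / ⟪v, v⟫) • v

/-- If two affine reflections of a real inner product space agree at a point which
one of them does not fix, then they are equal as maps. -/
theorem affineReflection_eq_of_eq_of_ne {V : Type*} [NormedAddCommGroup V]
    [InnerProductSpace ℝ V] {v₁ v₂ : V} (hv₁ : v₁ ≠ 0) (hv₂ : v₂ ≠ 0) (c₁ c₂ : ℝ) (μ : V)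
    (heq : affineReflection v₁ c₁ μ = affineReflection v₂ c₂ μ)
    (hne : affineReflection v₁ c₁ μ ≠ μ) :
    affineReflection v₁ c₁ = affineReflection v₂ c₂ := by
  have hs₁ : ⟪v₁, v₁⟫ ≠ 0 := fun h => hv₁ (inner_self_eq_zero.mp h)
  have hs₂ : ⟪v₂, v₂⟫ ≠ 0 := fun h => hv₂ (inner_self_eq_zero.mp h)
  set a : ℝ := (2 * (⟪μ, v₁⟫ - c₁)) / ⟪v₁, v₁⟫ with ha
  set b : ℝ := (2 * (⟪μ, v₂⟫ - c₂)) / ⟪v₂, v₂⟫ with hb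
  have hab : a • v₁ = b • v₂ := by
    have h := heq
    unfold affineReflection at h
    rw [← ha, ← hb] at h
    exact sub_right_injective h
  have ha0 : a ≠ 0 := by
    intro h
    apply hne
    unfold affineReflection
    rw [← ha, h, zero_smul, sub_zero]
  have hb0 : b ≠ 0 := by
    intro h
    rw [h, zero_smul] at hab
    exact ha0 (by simpa [hv₁] using smul_eq_zero.mp hab)
  -- v₂ = t • v₁ with t = a / b
  clear_value a b
  set t : ℝ := a / b with ht
  clear_value t
  have ht0 : t ≠ 0 := ht ▸ div_ne_zero ha0 hb0
  have hv : v₂ = t • v₁ := by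
    have h := congrArg (fun w => b⁻¹ • w) hab
    simp only [smul_smul, inv_mul_cancel₀ hb0, one_smul] at h
    rw [← h, ht, div_eq_inv_mul]
  -- relations between inner products
  have hmv : ⟪μ, v₂⟫ = t * ⟪μ, v₁⟫ := by rw [hv, real_inner_smul_right]
  have hvv : ⟪v₂, v₂⟫ = t^2 * ⟪v₁, v₁⟫ := by
    rw [hv, real_inner_smul_right, real_inner_smul_left]; ring
  -- a = t * b gives c₂ = t * c₁
  have hatb : a = t * b := by rw [ht]; field_simp
  have hc : c₂ = t * c₁ := by
    rw [ha, hb, hmv, hvv] at hatb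
    field_simp at hatb
    have h1 : t * (2 * (⟪μ, v₁⟫ - c₁) * t) = t * (2 * (t * ⟪μ, v₁⟫ - c₂)) := by
      apply mul_right_cancel₀ hs₁
      linear_combination (2 * t * ⟪v₁, v₁⟫) * hatb
    have h2 := mul_left_cancel₀ ht0 h1
    linear_combination h2 / 2
  funext x
  unfold affineReflection
  rw [hv, hc]
  simp only [real_inner_smul_left, real_inner_smul_right, smul_smul]
  congr 2
  rw [div_mul_eq_mul_div, div_eq_div_iff hs₁ (mul_ne_zero ht0 (mul_ne_zero ht0 hs₁))]
  ring
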